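/- Fix n ≥ 1 and k ≥ 1, and let P be B_n^{[k]} with a maximum 1̂ adjoined. A maximal chain of P is ascent-free with respect to the labeling λ̄ if and only if it equals c(σ,c) ∪ {1̂} for some ascent-free colored permutation (σ,c) of [n] with colors in [k] satisfying c(σ(n)) ≠ 1. In particular the number of ascent-free maximal chains of P is |{ (σ,c) ∈ Ninc_n^{[k]} : c(σ(n)) ≠ 1 }|. -/

import Mathlib

/-!
STATEMENT 10: the ascent-free maximal chains of P = B_n^{[k]} ∪ {1̂} are exactly the
chains c(σ,c) ∪ {1̂} for (σ,c) ∈ Ninc_n^{[k]} with c(σ(n)) ≠ 1; in particular their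
number is |{(σ,c) ∈ Ninc_n^{[k]} : c(σ(n)) ≠ 1}|.

Conventions.  Colors {1,…,k} are modeled by `Fin k` (0-indexed, order-isomorphic), so
the condition c(σ(n)) ≠ 1 becomes (c (σ (n-1))).val ≠ 0 (positions are 0-indexed too).
Weak compositions with support in [k] are multisets over `Fin k`; e_i corresponds to {i}.
Labels live in ℕ × ℕ with the product order; a cover (A,ν) ⋖ (A∪{x},ν+e_i) is labeled
(x,i) and covers into ⊤ are labeled (n,0).  Chains are lists bottom to top; a maximal
chain of P runs from the minimum 0̂ = (∅,0) to the maximum ⊤ through covers.  A chain is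
ascent-free if no consecutive pair of its labels strictly increases in the product order.
-/

@[ext] structure WSubK (n k : ℕ) where
  carrier : Finset (Fin n)
  wt : Multiset (Fin k)
  card_eq : Multiset.card wt = carrier.card

instance {n k : ℕ} : PartialOrder (WSubK n k) where
  le p q := p.carrier ⊆ q.carrier ∧ p.wt ≤ q.wt
  le_refl p := ⟨subset_rfl, le_rfl⟩
  le_trans a b c hab hbc := ⟨hab.1.trans hbc.1, hab.2.trans hbc.2⟩
  le_antisymm a b hab hba :=
    WSubK.ext (Finset.Subset.antisymm hab.1 hba.1) (le_antisymm hab.2 hba.2)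

def labK {n k : ℕ} (p q : WithTop (WSubK n k)) : ℕ × ℕ :=
  match p, q with
  | (p : WSubK n k), (q : WSubK n k) =>
      (∑ x ∈ q.carrier \ p.carrier, (x : ℕ), ((q.wt - p.wt).map Fin.val).sum)
  | _, _ => (n, 0)

def labelWordK {n k : ℕ} (c : List (WithTop (WSubK n k))) : List (ℕ × ℕ) :=
  List.zipWith labK c c.tail

def IsMaxChain' {α : Type*} [PartialOrder α] (x y : α) (c : List α) : Prop :=
  c.Chain' (· ⋖ ·) ∧ c.head? = some x ∧ c.getLast? = some y

def chainEltK {n k : ℕ} (σ : Equiv.Perm (Fin n)) (c : Fin n → Fin k) (i : ℕ) : WSubK n k :=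
  ⟨(Finset.univ.filter (fun p : Fin n => (p : ℕ) < i)).image σ,
   (Finset.univ.filter (fun p : Fin n => (p : ℕ) < i)).val.map (fun p => c (σ p)),
   by rw [Multiset.card_map, Finset.card_image_of_injective _ σ.injective]; rfl⟩

/-- The maximal chain `c(σ,c) ∪ {1̂}` of `B_n^{[k]} ∪ {1̂}` associated with the colored
permutation `(σ,c)`. -/
def hatChainOf {n k : ℕ} (σ : Equiv.Perm (Fin n)) (c : Fin n → Fin k) :
    List (WithTop (WSubK n k)) :=
  ((List.range (n + 1)).map (fun i => ((chainEltK σ c i : WSubK n k) : WithTop (WSubK n k))))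
    ++ [⊤]

/-- An ascent of the colored permutation `(σ, c)`. -/
def HasAscent {n : ℕ} {C : Type*} [Preorder C] (σ : Equiv.Perm (Fin n)) (c : Fin n → C) : Prop :=
  ∃ i : ℕ, ∃ h : i + 1 < n,
    σ ⟨i, Nat.lt_of_succ_lt h⟩ < σ ⟨i + 1, h⟩ ∧
      c (σ ⟨i, Nat.lt_of_succ_lt h⟩) ≤ c (σ ⟨i + 1, h⟩)

section Test
variable {n k : ℕ}

lemma WSubK.le_def (a b : WSubK n k) : a ≤ b ↔ a.carrier ⊆ b.carrier ∧ a.wt ≤ b.wt := Iff.rfl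

lemma WSubK.carrier_ssubset_of_lt {a b : WSubK n k} (h : a < b) : a.carrier ⊂ b.carrier := by
  rcases lt_iff_le_and_ne.mp h with ⟨⟨hc, hw⟩, hne⟩
  refine ssubset_of_subset_of_ne hc fun hEq => hne ?_
  have hcard : Multiset.card b.wt ≤ Multiset.card a.wt := by
    rw [a.card_eq, b.card_eq, hEq]
  exact WSubK.ext hEq (Multiset.eq_of_le_of_card_le hw hcard)

lemma WSubK.lt_of_le_of_card {a b : WSubK n k} (h : a ≤ b)
    (hc : a.carrier.card < b.carrier.card) : a < b :=
  lt_iff_le_and_ne.mpr ⟨h, fun hEq => by rw [hEq] at hc; omega⟩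

lemma WSubK.covBy_iff {a b : WSubK n k} :
    a ⋖ b ↔ a ≤ b ∧ b.carrier.card = a.carrier.card + 1 := by
  constructor
  · rintro ⟨hlt, hmid⟩
    refine ⟨hlt.le, ?_⟩
    have hss := WSubK.carrier_ssubset_of_lt hlt
    have h1 : a.carrier.card < b.carrier.card := Finset.card_lt_card hss
    by_contra hne
    have h2 : a.carrier.card + 2 ≤ b.carrier.card := by omega
    obtain ⟨x, hx⟩ : (b.carrier \ a.carrier).Nonempty := by
      rw [Finset.sdiff_nonempty]; exact fun hsub => hss.2 hsub
    rw [Finset.mem_sdiff] at hx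
    have hwle : a.wt ≤ b.wt := hlt.le.2
    obtain ⟨i, hi⟩ : ∃ i, i ∈ b.wt - a.wt := by
      apply Multiset.exists_mem_of_ne_zero
      intro h0
      have : b.wt ≤ a.wt := tsub_eq_zero_iff_le.mp h0
      have : Multiset.card b.wt ≤ Multiset.card a.wt := Multiset.card_le_card this
      rw [a.card_eq, b.card_eq] at this; omega
    set mid : WSubK n k := ⟨insert x a.carrier, i ::ₘ a.wt, by
      rw [Multiset.card_cons, a.card_eq, Finset.card_insert_of_notMem hx.2]⟩ with hmiddef
    have hamid : a < mid := by
      apply WSubK.lt_of_le_of_card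
      · exact ⟨Finset.subset_insert _ _, Multiset.le_cons_self _ _⟩
      · simp [hmiddef, Finset.card_insert_of_notMem hx.2]
    have hmidb : mid < b := by
      apply WSubK.lt_of_le_of_card
      · constructor
        · exact Finset.insert_subset hx.1 hlt.le.1
        · have : a.wt + {i} ≤ a.wt + (b.wt - a.wt) :=
            add_le_add le_rfl (Multiset.singleton_le.mpr hi)
          rw [add_tsub_cancel_of_le hwle] at this
          rwa [add_comm, Multiset.singleton_add] at this
      · simp only [hmiddef, Finset.card_insert_of_notMem hx.2]; omega
    exact hmid hamid hmidb
  · rintro ⟨hle, hcard⟩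
    constructor
    · exact WSubK.lt_of_le_of_card hle (by omega)
    · intro m h1 h2
      have c1 := Finset.card_lt_card (WSubK.carrier_ssubset_of_lt h1)
      have c2 := Finset.card_lt_card (WSubK.carrier_ssubset_of_lt h2)
      omega
end Test
section Test2
variable {n k : ℕ}

lemma WSubK.covBy_exists {a b : WSubK n k} (h : a ⋖ b) :
    ∃ x : Fin n, x ∉ a.carrier ∧ ∃ i : Fin k,
      b.carrier = insert x a.carrier ∧ b.wt = i ::ₘ a.wt := by
  obtain ⟨hle, hcard⟩ := WSubK.covBy_iff.mp h
  have hdc : (b.carrier \ a.carrier).card = 1 := by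
    rw [Finset.card_sdiff_of_subset hle.1]; omega
  obtain ⟨x, hx⟩ := Finset.card_eq_one.mp hdc
  have hxmem : x ∈ b.carrier ∧ x ∉ a.carrier := by
    have : x ∈ b.carrier \ a.carrier := hx ▸ Finset.mem_singleton_self x
    exact Finset.mem_sdiff.mp this
  refine ⟨x, hxmem.2, ?_⟩
  have hbc : b.carrier = insert x a.carrier := by
    rw [← Finset.sdiff_union_of_subset hle.1, hx]
    ext y; simp [or_comm]
  have hwc : Multiset.card (b.wt - a.wt) = 1 := by
    rw [Multiset.card_sub hle.2, a.card_eq, b.card_eq]; omega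
  obtain ⟨i, hi⟩ := Multiset.card_eq_one.mp hwc
  refine ⟨i, hbc, ?_⟩
  have := tsub_add_cancel_of_le hle.2
  rw [hi] at this
  rw [← this, Multiset.singleton_add]

lemma WSubK.covBy_mk {a : WSubK n k} {x : Fin n} (hx : x ∉ a.carrier) (i : Fin k)
    {b : WSubK n k} (hbc : b.carrier = insert x a.carrier) (hbw : b.wt = i ::ₘ a.wt) :
    a ⋖ b := by
  apply WSubK.covBy_iff.mpr
  refine ⟨⟨hbc ▸ Finset.subset_insert _ _, hbw ▸ Multiset.le_cons_self _ _⟩, ?_⟩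
  rw [hbc, Finset.card_insert_of_notMem hx]

lemma labK_of_step {a b : WSubK n k} {x : Fin n} (hx : x ∉ a.carrier) {i : Fin k}
    (hbc : b.carrier = insert x a.carrier) (hbw : b.wt = i ::ₘ a.wt) :
    labK (a : WithTop (WSubK n k)) (b : WithTop (WSubK n k)) = ((x : ℕ), (i : ℕ)) := by
  show (∑ y ∈ b.carrier \ a.carrier, (y : ℕ), ((b.wt - a.wt).map Fin.val).sum) = _
  have h1 : b.carrier \ a.carrier = {x} := by
    rw [hbc]; exact Finset.insert_sdiff_cancel hx
  have h2 : b.wt - a.wt = {i} := by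
    rw [hbw, ← Multiset.singleton_add, add_tsub_cancel_right]
  rw [h1, h2]
  simp

lemma labK_top (a : WSubK n k) :
    labK (a : WithTop (WSubK n k)) (⊤ : WithTop (WSubK n k)) = (n, 0) := rfl

lemma WSubK.isMax_iff {a : WSubK n k} (hk : 1 ≤ k) :
    IsMax a ↔ a.carrier = Finset.univ := by
  constructor
  · intro hmax
    by_contra hne
    obtain ⟨x, hx⟩ : ∃ x, x ∉ a.carrier := by
      by_contra hno
      push_neg at hno
      exact hne (Finset.eq_univ_of_forall hno)
    set b : WSubK n k := ⟨insert x a.carrier, ⟨0, hk⟩ ::ₘ a.wt, by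
      rw [Multiset.card_cons, a.card_eq, Finset.card_insert_of_notMem hx]⟩ with hb
    have hab : a ≤ b := ⟨Finset.subset_insert _ _, Multiset.le_cons_self _ _⟩
    have := hmax hab
    have hcard := Finset.card_le_card this.1
    simp [hb, Finset.card_insert_of_notMem hx] at hcard
  · intro huniv b hab
    have hbc : b.carrier = Finset.univ := Finset.eq_univ_of_forall (fun y => hab.1 (huniv ▸ Finset.mem_univ y))
    have : Multiset.card b.wt ≤ Multiset.card a.wt := by
      rw [a.card_eq, b.card_eq, huniv, hbc]
    exact le_of_eq (WSubK.ext (by rw [huniv, hbc]) (Multiset.eq_of_le_of_card_le hab.2 this)).symm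

lemma WSubK.covBy_top_iff {a : WSubK n k} (hk : 1 ≤ k) :
    (a : WithTop (WSubK n k)) ⋖ ⊤ ↔ a.carrier = Finset.univ := by
  rw [WithTop.coe_covBy_top, WSubK.isMax_iff hk]
end Test2
section Test3
variable {n k : ℕ}

lemma filter_lt_succ {i : ℕ} (hi : i < n) :
    (Finset.univ.filter (fun p : Fin n => (p : ℕ) < i + 1)) =
      insert ⟨i, hi⟩ (Finset.univ.filter (fun p : Fin n => (p : ℕ) < i)) := by
  ext p
  simp only [Finset.mem_filter, Finset.mem_univ, true_and, Finset.mem_insert]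
  constructor
  · intro h
    rcases Nat.lt_succ_iff_lt_or_eq.mp h with h | h
    · exact Or.inr (by simp [Finset.mem_filter, h])
    · exact Or.inl (Fin.ext h)
  · rintro (h | h)
    · exact h ▸ Nat.lt_succ_self i
    · omega

lemma chainEltK_zero (σ : Equiv.Perm (Fin n)) (c : Fin n → Fin k) :
    chainEltK σ c 0 = ⟨∅, 0, by simp⟩ := by
  have : (Finset.univ.filter (fun p : Fin n => (p : ℕ) < 0)) = ∅ := by
    ext p; simp
  apply WSubK.ext <;> simp [chainEltK, this]

lemma chainEltK_carrier_succ (σ : Equiv.Perm (Fin n)) (c : Fin n → Fin k) {i : ℕ} (hi : i < n) :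
    (chainEltK σ c (i + 1)).carrier = insert (σ ⟨i, hi⟩) (chainEltK σ c i).carrier := by
  show Finset.image σ _ = insert _ (Finset.image σ _)
  rw [filter_lt_succ hi, Finset.image_insert]

lemma chainEltK_wt_succ (σ : Equiv.Perm (Fin n)) (c : Fin n → Fin k) {i : ℕ} (hi : i < n) :
    (chainEltK σ c (i + 1)).wt = c (σ ⟨i, hi⟩) ::ₘ (chainEltK σ c i).wt := by
  simp only [chainEltK]
  rw [filter_lt_succ hi, Finset.insert_val,
    Multiset.ndinsert_of_notMem (by simp), Multiset.map_cons]

lemma chainEltK_not_mem (σ : Equiv.Perm (Fin n)) (c : Fin n → Fin k) {i : ℕ} (hi : i < n) :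
    σ ⟨i, hi⟩ ∉ (chainEltK σ c i).carrier := by
  simp only [chainEltK, Finset.mem_image, Finset.mem_filter, Finset.mem_univ, true_and]
  rintro ⟨p, hp, hEq⟩
  have h2 := σ.injective hEq
  subst h2
  simp at hp

lemma chainEltK_covBy (σ : Equiv.Perm (Fin n)) (c : Fin n → Fin k) {i : ℕ} (hi : i < n) :
    chainEltK σ c i ⋖ chainEltK σ c (i + 1) :=
  WSubK.covBy_mk (chainEltK_not_mem σ c hi) (c (σ ⟨i, hi⟩))
    (chainEltK_carrier_succ σ c hi) (chainEltK_wt_succ σ c hi)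

lemma chainEltK_last (σ : Equiv.Perm (Fin n)) (c : Fin n → Fin k) :
    (chainEltK σ c n).carrier = Finset.univ := by
  show Finset.image σ _ = _
  have : (Finset.univ.filter (fun p : Fin n => (p : ℕ) < n)) = Finset.univ := by
    ext p; simp [p.isLt]
  rw [this]
  exact Finset.image_univ_equiv σ

lemma hatChainOf_maxChain (σ : Equiv.Perm (Fin n)) (c : Fin n → Fin k) (hk : 1 ≤ k) :
    IsMaxChain' ((⟨∅, 0, by simp⟩ : WSubK n k) : WithTop (WSubK n k)) ⊤ (hatChainOf σ c) := by
  refine ⟨?_, ?_, ?_⟩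
  · apply List.IsChain.append
    · rw [List.isChain_map]
      rw [List.isChain_range_succ]
      intro m hm
      exact WithTop.coe_covBy_coe.mpr (chainEltK_covBy σ c hm)
    · exact List.isChain_singleton _
    · intro x hx y hy
      simp only [List.head?_cons, Option.mem_def, Option.some.injEq] at hy
      subst hy
      rw [List.getLast?_map] at hx
      have hrange : (List.range (n+1)).getLast? = some n := by
        rw [List.getLast?_eq_getLast (by simp), List.getLast_range]
        rfl
      rw [hrange] at hx
      simp only [Option.map_some, Option.mem_def, Option.some.injEq] at hx
      subst hx
      exact (WSubK.covBy_top_iff hk).mpr (chainEltK_last σ c)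
  · rw [hatChainOf, List.range_succ_eq_map]
    simp only [List.map_cons, List.cons_append, List.head?_cons, Option.some.injEq]
    rw [chainEltK_zero]
  · rw [hatChainOf, List.getLast?_append_cons]
    rfl
end Test3
section Test4
variable {n k : ℕ}

lemma labelWordK_length (d : List (WithTop (WSubK n k))) :
    (labelWordK d).length = d.length - 1 := by
  simp [labelWordK]

lemma labelWordK_getElem (d : List (WithTop (WSubK n k))) (j : ℕ)
    (hj : j < (labelWordK d).length) :
    (labelWordK d)[j] = labK (d[j]'(by simp [labelWordK] at hj; omega))
      (d[j+1]'(by simp [labelWordK] at hj; omega)) := by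
  simp only [labelWordK, List.getElem_zipWith, List.getElem_tail]

lemma hat_length (σ : Equiv.Perm (Fin n)) (c : Fin n → Fin k) :
    (hatChainOf σ c).length = n + 2 := by
  simp [hatChainOf]

lemma hat_getElem_lt (σ : Equiv.Perm (Fin n)) (c : Fin n → Fin k) {j : ℕ} (hj : j < n + 1) :
    (hatChainOf σ c)[j]'(by rw [hat_length]; omega) = ((chainEltK σ c j : WSubK n k) :
      WithTop (WSubK n k)) := by
  simp only [hatChainOf]
  rw [List.getElem_append_left (by simpa using hj)]
  simp

lemma hat_getElem_last (σ : Equiv.Perm (Fin n)) (c : Fin n → Fin k) :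
    (hatChainOf σ c)[n+1]'(by rw [hat_length]; omega) = (⊤ : WithTop (WSubK n k)) := by
  simp only [hatChainOf]
  rw [List.getElem_append_right (by simp)]
  simp

lemma lab_hat_length (σ : Equiv.Perm (Fin n)) (c : Fin n → Fin k) :
    (labelWordK (hatChainOf σ c)).length = n + 1 := by
  rw [labelWordK_length, hat_length]
  omega

lemma lab_hat_lt (σ : Equiv.Perm (Fin n)) (c : Fin n → Fin k) {j : ℕ} (hj : j < n) :
    (labelWordK (hatChainOf σ c))[j]'(by rw [lab_hat_length]; omega) =
      (((σ ⟨j, hj⟩ : Fin n) : ℕ), ((c (σ ⟨j, hj⟩) : Fin k) : ℕ)) := by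
  rw [labelWordK_getElem]
  rw [hat_getElem_lt σ c (by omega : j < n + 1), hat_getElem_lt σ c (by omega : j + 1 < n + 1)]
  exact labK_of_step (chainEltK_not_mem σ c hj) (chainEltK_carrier_succ σ c hj)
    (chainEltK_wt_succ σ c hj)

lemma lab_hat_last (σ : Equiv.Perm (Fin n)) (c : Fin n → Fin k) :
    (labelWordK (hatChainOf σ c))[n]'(by rw [lab_hat_length]; omega) = (n, 0) := by
  rw [labelWordK_getElem]
  rw [hat_getElem_lt σ c (by omega : n < n + 1), hat_getElem_last]
  exact labK_top _

lemma chain'_hat_iff (hn : 1 ≤ n) (σ : Equiv.Perm (Fin n)) (c : Fin n → Fin k) :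
    (labelWordK (hatChainOf σ c)).Chain' (fun a b => ¬ a < b) ↔
      ¬ HasAscent σ c ∧ ((c (σ ⟨n - 1, by omega⟩)) : ℕ) ≠ 0 := by
  unfold List.Chain'
  rw [List.isChain_iff_getElem]
  constructor
  · intro h
    constructor
    · rintro ⟨i, hi, h1, h2⟩
      have hlen : i + 1 < (labelWordK (hatChainOf σ c)).length := by
        rw [lab_hat_length]; omega
      have := h i hlen
      rw [lab_hat_lt σ c (by omega : i < n), lab_hat_lt σ c hi] at this
      apply this
      rw [Prod.lt_iff]
      left
      exact ⟨h1, h2⟩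
    · intro hc0
      have hlen : n - 1 + 1 < (labelWordK (hatChainOf σ c)).length := by
        rw [lab_hat_length]; omega
      have := h (n-1) hlen
      rw [lab_hat_lt σ c (by omega : n - 1 < n)] at this
      have hEq : n - 1 + 1 = n := by omega
      simp only [hEq] at this
      rw [lab_hat_last σ c] at this
      apply this
      rw [Prod.lt_iff]
      left
      exact ⟨(σ ⟨n-1, by omega⟩).isLt, by omega⟩
  · rintro ⟨hasc, hcol⟩ j hlen
    rw [lab_hat_length] at hlen
    rcases Nat.lt_or_ge (j+1) n with hj | hj
    · rw [lab_hat_lt σ c (by omega : j < n), lab_hat_lt σ c hj]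
      intro hlt
      apply hasc
      rw [Prod.lt_iff] at hlt
      have hne : σ ⟨j, by omega⟩ ≠ σ ⟨j+1, hj⟩ := fun hEq => by
        have := σ.injective hEq
        simp [Fin.ext_iff] at this
      have hne' : ((σ ⟨j, by omega⟩ : Fin n) : ℕ) ≠ ((σ ⟨j+1, hj⟩ : Fin n) : ℕ) :=
        fun hEq => hne (Fin.ext hEq)
      refine ⟨j, hj, ?_, ?_⟩
      · rw [Fin.lt_def]
        rcases hlt with ⟨h1, _⟩ | ⟨h1, _⟩
        · exact h1
        · exact lt_of_le_of_ne h1 hne'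
      · rw [Fin.le_def]
        rcases hlt with ⟨_, h2⟩ | ⟨_, h2⟩
        · exact h2
        · exact le_of_lt h2
    · have hj' : j = n - 1 := by omega
      subst hj'
      have hEq : n - 1 + 1 = n := by omega
      rw [lab_hat_lt σ c (by omega : n - 1 < n)]
      simp only [hEq]
      rw [lab_hat_last σ c]
      intro hlt
      apply hcol
      rw [Prod.lt_iff] at hlt
      rcases hlt with ⟨_, h2⟩ | ⟨_, h2⟩
      · omega
      · omega
end Test4
section Test5
variable {n k : ℕ}

lemma maxChain_decomp (d : List (WithTop (WSubK n k))) :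
    ∀ a : WSubK n k, d.Chain' (· ⋖ ·) → d.head? = some ↑a → d.getLast? = some ⊤ →
    ∃ (l : List (WSubK n k)) (t : WSubK n k),
      d = l.map (fun x : WSubK n k => (WithTop.some x)) ++ [⊤] ∧ l.Chain' (· ⋖ ·) ∧
        l.head? = some a ∧ l.getLast? = some t ∧ IsMax t := by
  induction d with
  | nil => intro a _ h _; simp at h
  | cons x xs ih =>
    intro a hchain hhead hlast
    simp only [List.head?_cons, Option.some.injEq] at hhead
    subst hhead
    cases xs with
    | nil =>
      simp only [List.getLast?_singleton, Option.some.injEq] at hlast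
      exact absurd hlast (WithTop.coe_ne_top)
    | cons y rest =>
      unfold List.Chain' at hchain
      rw [List.isChain_cons_cons] at hchain
      obtain ⟨hxy, hchain⟩ := hchain
      have hlast' : (y :: rest).getLast? = some ⊤ := by
        rwa [List.getLast?_cons_cons] at hlast
      cases y with
      | top =>
        -- y = ⊤
        have hmaxa : IsMax a := WithTop.coe_covBy_top.mp hxy
        cases rest with
        | nil => exact ⟨[a], a, rfl, List.isChain_singleton _, rfl, rfl, hmaxa⟩
        | cons z rest' =>
          exfalso
          rw [List.isChain_cons_cons] at hchain
          exact not_top_lt hchain.1.lt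
      | coe b =>
        obtain ⟨l', t, hdeq, hch, hhd, hlst, hmax⟩ := ih b hchain rfl hlast'
        refine ⟨a :: l', t, ?_, ?_, rfl, ?_, hmax⟩
        · rw [List.map_cons, List.cons_append, hdeq]
        · unfold List.Chain'
          rw [List.isChain_cons]
          refine ⟨?_, hch⟩
          intro y hy
          rw [hhd] at hy
          simp only [Option.mem_def, Option.some.injEq] at hy
          subst hy
          exact WithTop.coe_covBy_coe.mp hxy
        · cases l' with
          | nil => simp at hlst
          | cons b' l'' => rw [List.getLast?_cons_cons]; exact hlst
  end Test5
section Test6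
variable {n k : ℕ}

lemma maxChain_exists_hat (hn : 1 ≤ n) (hk : 1 ≤ k) (d : List (WithTop (WSubK n k)))
    (hd : IsMaxChain' ((⟨∅, 0, by simp⟩ : WSubK n k) : WithTop (WSubK n k)) ⊤ d) :
    ∃ (σ : Equiv.Perm (Fin n)) (c : Fin n → Fin k), d = hatChainOf σ c := by
  obtain ⟨hchain, hhead, hlast⟩ := hd
  obtain ⟨l, t, hdeq, hch, hhd, hlst, hmaxt⟩ := maxChain_decomp d _ hchain hhead hlast
  have hlnil : l ≠ [] := by intro h; rw [h] at hhd; simp at hhd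
  have hget : ∀ j, (h : j + 1 < l.length) → l[j]'(by omega) ⋖ l[j+1]'h := by
    intro j h
    have := List.isChain_iff_getElem.mp hch j (by omega)
    simpa using this
  have hl0 : ∀ (h : 0 < l.length), l[0] = (⟨∅, 0, by simp⟩ : WSubK n k) := by
    intro h
    cases l with
    | nil => simp at hlnil
    | cons a xs =>
      simp only [List.head?_cons, Option.some.injEq] at hhd
      simpa using hhd
  have hcard : ∀ j, (hj : j < l.length) → (l[j]).carrier.card = j := by
    intro j
    induction j with
    | zero => intro hj; rw [hl0 hj]; rfl
    | succ j ihj =>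
      intro hj
      have hc := (WSubK.covBy_iff.mp (hget j hj)).2
      rw [hc, ihj (by omega)]
  have htcard : t.carrier = Finset.univ := (WSubK.isMax_iff hk).mp hmaxt
  have hlen : l.length = n + 1 := by
    have h1 : l.getLast? = l[l.length - 1]? := List.getLast?_eq_getElem? (l := l)
    rw [hlst] at h1
    have hpos : 0 < l.length := List.length_pos_iff.mpr hlnil
    have h2 : l[l.length - 1]'(by omega) = t := by
      have := h1.symm
      rw [List.getElem?_eq_getElem (by omega)] at this
      exact Option.some.inj this
    have h3 := hcard (l.length - 1) (by omega)
    rw [h2, htcard] at h3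
    simp only [Finset.card_univ, Fintype.card_fin] at h3
    omega
  have hfin : ∀ i : Fin n, (i : ℕ) + 1 < l.length := fun i => by have := i.isLt; omega
  have hcov : ∀ i : Fin n, l[(i : ℕ)]'(by have := hfin i; omega) ⋖ l[(i : ℕ) + 1]'(hfin i) :=
    fun i => hget i (hfin i)
  have hstep : ∀ i : Fin n, ∃ x : Fin n, x ∉ (l[(i : ℕ)]'(by have := hfin i; omega)).carrier ∧
      ∃ col : Fin k, (l[(i : ℕ) + 1]'(hfin i)).carrier =
          insert x (l[(i : ℕ)]'(by have := hfin i; omega)).carrier ∧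
        (l[(i : ℕ) + 1]'(hfin i)).wt = col ::ₘ (l[(i : ℕ)]'(by have := hfin i; omega)).wt :=
    fun i => WSubK.covBy_exists (hcov i)
  choose f hf g hg1 hg2 using hstep
  have hmono : ∀ i j : ℕ, (hij : i ≤ j) → (hj : j < l.length) →
      (l[i]'(by omega)).carrier ⊆ (l[j]).carrier := by
    intro i j hij
    induction j with
    | zero =>
      intro hj
      have : i = 0 := by omega
      subst this; exact subset_rfl
    | succ j ihj =>
      intro hj
      rcases Nat.eq_or_lt_of_le hij with h | h
      · subst h; exact subset_rfl
      · exact (ihj (by omega) (by omega)).trans (WSubK.covBy_iff.mp (hget j hj)).1.1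
  have fkey : ∀ i j : Fin n, (i : ℕ) < (j : ℕ) → f i ≠ f j := by
    intro i j hij hfe
    have h1 : f i ∈ (l[(i : ℕ) + 1]'(hfin i)).carrier := by
      rw [hg1 i]; exact Finset.mem_insert_self _ _
    have h2 : (l[(i : ℕ) + 1]'(hfin i)).carrier ⊆ (l[(j : ℕ)]'(by have := j.isLt; omega)).carrier :=
      hmono _ _ (by omega) (by have := j.isLt; omega)
    exact hf j (hfe ▸ h2 h1)
  have finj : Function.Injective f := by
    intro i j hEq
    by_contra hne
    rcases Nat.lt_or_ge (i : ℕ) (j : ℕ) with h | h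
    · exact fkey i j h hEq
    · have : (j : ℕ) < (i : ℕ) := by
        rcases Nat.eq_or_lt_of_le h with h' | h'
        · exact absurd (Fin.ext h'.symm) hne
        · exact h'
      exact fkey j i this hEq.symm
  let σ : Equiv.Perm (Fin n) := Equiv.ofBijective f (Finite.injective_iff_bijective.mp finj)
  have hσ : ∀ i, σ i = f i := fun _ => rfl
  refine ⟨σ, fun x => g (σ.symm x), ?_⟩
  set c : Fin n → Fin k := fun x => g (σ.symm x) with hc
  have hcσ : ∀ i, c (σ i) = g i := by
    intro i; rw [hc]; simp
  have claim : ∀ j, (hj : j < n + 1) → l[j]'(by omega) = chainEltK σ c j := by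
    intro j
    induction j with
    | zero => intro hj; rw [chainEltK_zero, hl0]
    | succ j ihj =>
      intro hj
      have hjn : j < n := by omega
      apply WSubK.ext
      · rw [chainEltK_carrier_succ σ c hjn, ← ihj (by omega), hσ]
        exact hg1 ⟨j, hjn⟩
      · rw [chainEltK_wt_succ σ c hjn, ← ihj (by omega), hcσ]
        exact hg2 ⟨j, hjn⟩
  rw [hdeq, hatChainOf]
  have hlmap : l = (List.range (n + 1)).map (chainEltK σ c) := by
    apply List.ext_getElem
    · rw [hlen, List.length_map, List.length_range]
    · intro j h1 h2
      rw [List.getElem_map, List.getElem_range]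
      exact claim j (by omega)
  rw [hlmap, List.map_map]
  rfl
end Test6
section Test7
variable {n k : ℕ}

lemma hatChainOf_inj {σ σ' : Equiv.Perm (Fin n)} {c c' : Fin n → Fin k}
    (h : hatChainOf σ c = hatChainOf σ' c') : σ = σ' ∧ c = c' := by
  have helt : ∀ j, (hj : j < n + 1) → chainEltK σ c j = chainEltK σ' c' j := by
    intro j hj
    have h1 : (hatChainOf σ c)[j]'(by rw [hat_length]; omega) =
        (hatChainOf σ' c')[j]'(by rw [hat_length]; omega) :=
      List.getElem_of_eq h _
    rw [hat_getElem_lt σ c hj, hat_getElem_lt σ' c' hj] at h1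
    exact WithTop.coe_injective h1
  have hσ : ∀ i : Fin n, σ i = σ' i := by
    intro i
    have hi := i.isLt
    have e0 := helt (i : ℕ) (by omega)
    have e1 := congrArg WSubK.carrier (helt ((i : ℕ) + 1) (by omega))
    rw [chainEltK_carrier_succ σ c hi, chainEltK_carrier_succ σ' c' hi, ← e0] at e1
    have hmem : σ ⟨(i : ℕ), hi⟩ ∈ insert (σ' ⟨(i : ℕ), hi⟩) (chainEltK σ c (i : ℕ)).carrier := by
      rw [← e1]; exact Finset.mem_insert_self _ _
    rcases Finset.mem_insert.mp hmem with h' | h'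
    · simpa using h'
    · exact absurd h' (chainEltK_not_mem σ c hi)
  have hσeq : σ = σ' := Equiv.ext hσ
  refine ⟨hσeq, ?_⟩
  funext x
  have hcc : ∀ i : Fin n, c (σ i) = c' (σ' i) := by
    intro i
    have hi := i.isLt
    have e0 := helt (i : ℕ) (by omega)
    have e2 := congrArg WSubK.wt (helt ((i : ℕ) + 1) (by omega))
    rw [chainEltK_wt_succ σ c hi, chainEltK_wt_succ σ' c' hi, ← e0] at e2
    have := (Multiset.cons_inj_left _).mp e2
    simpa using this
  have := hcc (σ.symm x)
  rw [Equiv.apply_symm_apply, ← hσeq, Equiv.apply_symm_apply] at this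
  exact this
end Test7
theorem ascent_free_chains_of_hat_poset (n k : ℕ) (hn : 1 ≤ n) (hk : 1 ≤ k) :
    (∀ d : List (WithTop (WSubK n k)),
      IsMaxChain' ((⟨∅, 0, by simp⟩ : WSubK n k) : WithTop (WSubK n k)) ⊤ d →
        ((labelWordK d).Chain' (fun a b => ¬ a < b) ↔
          ∃ (σ : Equiv.Perm (Fin n)) (c : Fin n → Fin k),
            ¬ HasAscent σ c ∧ (c (σ ⟨n - 1, by omega⟩)).val ≠ 0 ∧ d = hatChainOf σ c)) ∧
    Nat.card {d : List (WithTop (WSubK n k)) //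
        IsMaxChain' ((⟨∅, 0, by simp⟩ : WSubK n k) : WithTop (WSubK n k)) ⊤ d ∧
          (labelWordK d).Chain' (fun a b => ¬ a < b)} =
      Nat.card {w : Equiv.Perm (Fin n) × (Fin n → Fin k) //
        ¬ HasAscent w.1 w.2 ∧ (w.2 (w.1 ⟨n - 1, by omega⟩)).val ≠ 0} := by
  have main : ∀ d : List (WithTop (WSubK n k)),
      IsMaxChain' ((⟨∅, 0, by simp⟩ : WSubK n k) : WithTop (WSubK n k)) ⊤ d →
        ((labelWordK d).Chain' (fun a b => ¬ a < b) ↔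
          ∃ (σ : Equiv.Perm (Fin n)) (c : Fin n → Fin k),
            ¬ HasAscent σ c ∧ (c (σ ⟨n - 1, by omega⟩)).val ≠ 0 ∧ d = hatChainOf σ c) := by
    intro d hd
    constructor
    · intro haf
      obtain ⟨σ, c, rfl⟩ := maxChain_exists_hat hn hk d hd
      rw [chain'_hat_iff hn σ c] at haf
      exact ⟨σ, c, haf.1, haf.2, rfl⟩
    · rintro ⟨σ, c, h1, h2, rfl⟩
      exact (chain'_hat_iff hn σ c).mpr ⟨h1, h2⟩
  refine ⟨main, ?_⟩
  let F : {w : Equiv.Perm (Fin n) × (Fin n → Fin k) //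
        ¬ HasAscent w.1 w.2 ∧ (w.2 (w.1 ⟨n - 1, by omega⟩)).val ≠ 0} →
      {d : List (WithTop (WSubK n k)) //
        IsMaxChain' ((⟨∅, 0, by simp⟩ : WSubK n k) : WithTop (WSubK n k)) ⊤ d ∧
          (labelWordK d).Chain' (fun a b => ¬ a < b)} :=
    fun w => ⟨hatChainOf w.1.1 w.1.2, hatChainOf_maxChain _ _ hk,
      (chain'_hat_iff hn _ _).mpr ⟨w.2.1, w.2.2⟩⟩
  have hbij : Function.Bijective F := by
    constructor
    · rintro ⟨⟨σ, c⟩, hw⟩ ⟨⟨σ', c'⟩, hw'⟩ h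
      have hlist : hatChainOf σ c = hatChainOf σ' c' := congrArg Subtype.val h
      obtain ⟨h1, h2⟩ := hatChainOf_inj hlist
      exact Subtype.ext (Prod.ext h1 h2)
    · rintro ⟨d, hmax, haf⟩
      obtain ⟨σ, c, h1, h2, hdeq⟩ := (main d hmax).mp haf
      exact ⟨⟨(σ, c), ⟨h1, h2⟩⟩, Subtype.ext hdeq.symm⟩
  exact (Nat.card_congr (Equiv.ofBijective F hbij)).symm
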